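/- arXiv:1611.08150 — 6 statements merged into one kernel-verified Lean document; each statement's English description precedes it below -/
import Mathlib

section
/- Let (P, ≤) be a partial order with largest element 1, and let T ⊆ P be a subtree of P (i.e., 1 ∈ T and T with the restricted order is a tree: for every t ∈ T the set of predecessors pred_T(t) = {s ∈ T : s ≥ t} is well-ordered by the reverse order). Then T is maximal with respect to end-extension if and only if for every p ∈ P, either there is q ∈ T with q ≤ p, or there are incomparable elements q, r ∈ T with p ≤ q and p ≤ r. -/
/-- The set of predecessors of `t` in `T` (including `t` itself):
`pred_T(t) = {s ∈ T : s ≥ t}`. -/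
def TreePred {P : Type*} [PartialOrder P] (T : Set P) (t : P) : Set P :=
  {s ∈ T | t ≤ s}

/-- `T` is a subtree of the partial order `P` with largest element `⊤`:
`⊤ ∈ T` and for every `t ∈ T` the set of predecessors of `t` in `T` is
well-ordered by the reverse order, i.e. every nonempty subset of `pred_T(t)`
has a greatest element. -/
def IsSubtree {P : Type*} [PartialOrder P] [OrderTop P] (T : Set P) : Prop :=
  ⊤ ∈ T ∧ ∀ t ∈ T, ∀ S ⊆ TreePred T t, S.Nonempty → ∃ m ∈ S, ∀ s ∈ S, s ≤ m

/-- `T` end-extends `S`: `S ⊆ T` and `pred_T(s) = pred_S(s)` for all `s ∈ S`. -/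
def EndExt {P : Type*} [PartialOrder P] (S T : Set P) : Prop :=
  S ⊆ T ∧ ∀ s ∈ S, TreePred T s = TreePred S s

/-- A subtree `T` of `P` is maximal with respect to end-extension iff for every `p ∈ P`,
either there is `q ∈ T` with `q ≤ p`, or there are incomparable `q, r ∈ T`
with `p ≤ q` and `p ≤ r`. -/
theorem subtree_maximal_iff {P : Type*} [PartialOrder P] [OrderTop P]
    (T : Set P) (hT : IsSubtree T) :
    (∀ T', IsSubtree T' → EndExt T T' → T' = T) ↔
      ∀ p : P, (∃ q ∈ T, q ≤ p) ∨
        ∃ q ∈ T, ∃ r ∈ T, ¬ q ≤ r ∧ ¬ r ≤ q ∧ p ≤ q ∧ p ≤ r := by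
  constructor
  · intro hmax p
    by_contra hcon
    push_neg at hcon
    obtain ⟨h1, h2⟩ := hcon
    -- h1 : ∀ q ∈ T, ¬ q ≤ p
    -- h2 : comparability of elements of T above p
    have hcomp : ∀ q ∈ T, ∀ r ∈ T, p ≤ q → p ≤ r → q ≤ r ∨ r ≤ q := by
      intro q hq r hr hpq hpr
      by_contra hc
      push_neg at hc
      exact (h2 q hq r hr hc.1 hc.2 hpq) hpr
    have hpT : p ∉ T := fun hp => h1 p hp le_rfl
    set T' : Set P := insert p T with hT'def
    -- TreePred is unchanged at points of T
    have hpred : ∀ t ∈ T, TreePred T' t = TreePred T t := by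
      intro t ht
      ext s
      constructor
      · rintro ⟨hs, hts⟩
        rcases hs with rfl | hs
        · exact absurd hts (h1 t ht)
        · exact ⟨hs, hts⟩
      · rintro ⟨hs, hts⟩
        exact ⟨Or.inr hs, hts⟩
    have hsub : IsSubtree T' := by
      refine ⟨Or.inr hT.1, ?_⟩
      intro t ht S hS hSne
      rcases ht with rfl | ht
      · -- t = p
        by_cases hS' : (S \ {t}).Nonempty
        · obtain ⟨s0, hs0S, hs0ne⟩ := hS'
          have hs0 : s0 ∈ TreePred T' t := hS hs0S
          have hs0T : s0 ∈ T := by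
            rcases hs0.1 with rfl | h
            · exact absurd rfl hs0ne
            · exact h
          have hps0 : t ≤ s0 := hs0.2
          -- S'' = elements of S above s0
          have hsub2 : {s ∈ S | s0 ≤ s} ⊆ TreePred T s0 := by
            intro s ⟨hsS, hs0s⟩
            have hs : s ∈ TreePred T' t := hS hsS
            have hsT : s ∈ T := by
              rcases hs.1 with rfl | h
              · exact absurd (le_antisymm (hps0.trans hs0s) hs.2 ▸ hs0s)
                  (by simpa using h1 s0 hs0T)
              · exact h
            exact ⟨hsT, hs0s⟩
          obtain ⟨m, ⟨hmS, hs0m⟩, hm⟩ := hT.2 s0 hs0T _ hsub2 ⟨s0, hs0S, le_rfl⟩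
          refine ⟨m, hmS, ?_⟩
          intro s hsS
          have hs : s ∈ TreePred T' t := hS hsS
          rcases hs.1 with rfl | hsT
          · exact hps0.trans hs0m
          · rcases hcomp s0 hs0T s hsT hps0 hs.2 with h | h
            · exact hm s ⟨hsS, h⟩
            · exact h.trans hs0m
        · -- S ⊆ {t}
          rw [Set.not_nonempty_iff_eq_empty, Set.diff_eq_empty] at hS'
          obtain ⟨s, hs⟩ := hSne
          have : s = t := hS' hs
          subst this
          exact ⟨s, hs, fun x hx => le_of_eq (hS' hx)⟩
      · rw [hpred t ht] at hS
        exact hT.2 t ht S hS hSne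
    have hext : EndExt T T' := ⟨Set.subset_insert p T, fun s hs => hpred s hs⟩
    have := hmax T' hsub hext
    exact hpT (this ▸ Set.mem_insert p T)
  · intro hcond T' hT' hext
    ext x
    constructor
    · intro hx
      rcases hcond x with ⟨q, hq, hqx⟩ | ⟨q, hq, r, hr, hqr, hrq, hxq, hxr⟩
      · have : x ∈ TreePred T' q := ⟨hx, hqx⟩
        rw [hext.2 q hq] at this
        exact this.1
      · have hsub : ({q, r} : Set P) ⊆ TreePred T' x := by
          rintro s (rfl | rfl)
          · exact ⟨hext.1 hq, hxq⟩
          · exact ⟨hext.1 hr, hxr⟩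
        obtain ⟨m, hm, hmax⟩ := hT'.2 x hx _ hsub ⟨q, Or.inl rfl⟩
        rcases hm with rfl | rfl
        · exact absurd (hmax r (Or.inr rfl)) hrq
        · exact absurd (hmax q (Or.inl rfl)) hqr
    · exact fun hx => hext.1 hx
end

section
/- There is a maximal subtree of (P(ω) \ {∅}, ⊆) of size ω (countably infinite). -/
/-- The predecessors of `t` in `T` with respect to inclusion. -/
def InclPred (T : Set (Set ℕ)) (t : Set ℕ) : Set (Set ℕ) := {s ∈ T | t ⊆ s}

/-- `T` is a subtree of `(P(ω) \ {∅}, ⊆)`: all members are nonempty, the largest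
element `ω` belongs to `T`, and the predecessors of each node are well-ordered by
reverse inclusion (every nonempty subset of a predecessor set has a `⊆`-greatest element). -/
def IsInclTree (T : Set (Set ℕ)) : Prop :=
  (∀ A ∈ T, A.Nonempty) ∧ Set.univ ∈ T ∧
    ∀ t ∈ T, ∀ S ⊆ InclPred T t, S.Nonempty → ∃ m ∈ S, ∀ s ∈ S, s ⊆ m

/-- `T` end-extends `S` (as subtrees of `(P(ω) \ {∅}, ⊆)`). -/
def InclEndExt (S T : Set (Set ℕ)) : Prop :=
  S ⊆ T ∧ ∀ s ∈ S, InclPred T s = InclPred S s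

/-- There is a countably infinite maximal subtree of `(P(ω) \ {∅}, ⊆)`. -/
theorem exists_countable_maximal_incl_tree :
    ∃ T : Set (Set ℕ), IsInclTree T ∧
      (∀ T', IsInclTree T' → InclEndExt T T' → T' = T) ∧
      T.Countable ∧ T.Infinite := by
  classical
  set T : Set (Set ℕ) :=
    Set.range (Set.Ici : ℕ → Set ℕ) ∪ Set.range (fun n => ({n} : Set ℕ)) with hT
  have hne : ∀ A ∈ T, A.Nonempty := by
    rintro A (⟨n, rfl⟩ | ⟨n, rfl⟩)
    · exact ⟨n, le_refl n⟩
    · exact ⟨n, rfl⟩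
  have hsingle : ∀ n : ℕ, ({n} : Set ℕ) ∈ T := fun n => Or.inr ⟨n, rfl⟩
  refine ⟨T, ⟨hne, ?_, ?_⟩, ?_, ?_, ?_⟩
  · -- univ ∈ T
    exact Or.inl ⟨0, by ext x; simp⟩
  · -- well-ordering of predecessors
    intro t ht S hS hSne
    by_cases hcase : ∃ k, Set.Ici k ∈ S
    · -- S contains a tail; take the largest tail in S
      have hKne : {k | Set.Ici k ∈ S}.Nonempty := hcase
      set k₀ := sInf {k | Set.Ici k ∈ S} with hk₀def
      have hk₀ : Set.Ici k₀ ∈ S := Nat.sInf_mem hKne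
      refine ⟨Set.Ici k₀, hk₀, ?_⟩
      intro s hs
      have hs' := hS hs
      have htIci : t ⊆ Set.Ici k₀ := (hS hk₀).2
      rcases hs'.1 with ⟨j, rfl⟩ | ⟨j, rfl⟩
      · exact Set.Ici_subset_Ici.mpr (Nat.sInf_le hs)
      · -- s = {j}; then t = {j} since t is nonempty and t ⊆ {j}
        have htne : t.Nonempty := hne t ht
        have : t = {j} := by
          rcases (Set.subset_singleton_iff_eq).mp hs'.2 with h | h
          · exact absurd h (Set.nonempty_iff_ne_empty.mp htne)
          · exact h
        show ({j} : Set ℕ) ⊆ Set.Ici k₀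
        exact this ▸ htIci
    · -- S contains no tail: every element of S equals t
      push_neg at hcase
      have heq : ∀ s ∈ S, s = t := by
        intro s hs
        rcases (hS hs).1 with ⟨j, rfl⟩ | ⟨j, rfl⟩
        · exact absurd hs (hcase j)
        · have htne : t.Nonempty := hne t ht
          rcases (Set.subset_singleton_iff_eq).mp (hS hs).2 with h | h
          · exact absurd h (Set.nonempty_iff_ne_empty.mp htne)
          · exact h.symm
      obtain ⟨s, hs⟩ := hSne
      refine ⟨s, hs, fun s' hs' => ?_⟩
      rw [heq s hs, heq s' hs']
  · -- maximality
    intro T' hT' hext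
    refine Set.Subset.antisymm ?_ hext.1
    intro A hA
    obtain ⟨n, hn⟩ := hT'.1 A hA
    have hmem : A ∈ InclPred T' {n} := ⟨hA, Set.singleton_subset_iff.mpr hn⟩
    rw [hext.2 _ (hsingle n)] at hmem
    exact hmem.1
  · exact (Set.countable_range _).union (Set.countable_range _)
  · refine Set.Infinite.mono (Set.subset_union_right) ?_
    exact Set.infinite_range_of_injective (fun a b h => by simpa using h)
end

section
/- There is a maximal subtree of (P(ω) \ {∅}, ⊆) of size continuum. -/
namespace CMT

def Xf (f : ℕ → Bool) : Set ℕ := {m | m % 2 = (f (m / 2)).toNat}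

def Pk (k : ℕ) : Set ℕ := {m | m / 2 = k}

def T0 : Set (Set ℕ) := {Set.univ} ∪ Set.range Pk ∪ Set.range Xf

lemma mem_Xf {f : ℕ → Bool} {m : ℕ} : m ∈ Xf f ↔ m % 2 = (f (m / 2)).toNat := Iff.rfl

lemma toNat_le (b : Bool) : b.toNat ≤ 1 := by cases b <;> simp

lemma sel_mem_Xf (f : ℕ → Bool) (k : ℕ) : 2 * k + (f k).toNat ∈ Xf f := by
  have hb := toNat_le (f k)
  have h2 : (2 * k + (f k).toNat) / 2 = k := by omega
  rw [mem_Xf, h2]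
  omega

lemma Xf_ne_univ (f : ℕ → Bool) : Xf f ≠ Set.univ := by
  intro h
  have hb := toNat_le (f 0)
  have h1 : 2 * 0 + (1 - (f 0).toNat) ∈ Xf f := h ▸ Set.mem_univ _
  rw [mem_Xf] at h1
  have h2 : (2 * 0 + (1 - (f 0).toNat)) / 2 = 0 := by omega
  rw [h2] at h1
  omega

lemma Pk_ne_univ (k : ℕ) : Pk k ≠ Set.univ := by
  intro h
  have : 2 * k + 2 ∈ Pk k := h ▸ Set.mem_univ _
  simp only [Pk, Set.mem_setOf_eq] at this
  omega

lemma Xf_inj {f g : ℕ → Bool} (h : Xf f ⊆ Xf g) : f = g := by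
  funext k
  have hb := toNat_le (f k)
  have h1 := h (sel_mem_Xf f k)
  rw [mem_Xf] at h1
  have h2 : (2 * k + (f k).toNat) / 2 = k := by omega
  have h3 : (2 * k + (f k).toNat) % 2 = (f k).toNat := by omega
  rw [h2, h3] at h1
  cases hf : f k <;> cases hg : g k <;> rw [hf, hg] at h1 <;> simp at h1 <;> try rfl

/-- T0 is an antichain below univ. -/
lemma antichain : ∀ s ∈ T0, ∀ t ∈ T0, t ⊆ s → s = Set.univ ∨ s = t := by
  rintro s hs t ht hts
  rcases hs with (hs | ⟨k, rfl⟩) | ⟨f, rfl⟩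
  · left; exact hs
  · rcases ht with (rfl | ⟨j, rfl⟩) | ⟨g, rfl⟩
    · left; exact Set.univ_subset_iff.mp hts
    · right
      have h1 : 2 * j ∈ Pk j := by simp only [Pk, Set.mem_setOf_eq]; omega
      have := hts h1
      simp only [Pk, Set.mem_setOf_eq] at this ⊢
      have hjk : j = k := by omega
      rw [hjk]
    · exfalso
      have h1 := hts (sel_mem_Xf g 0)
      have h2 := hts (sel_mem_Xf g 1)
      have b0 := toNat_le (g 0)
      have b1 := toNat_le (g 1)
      simp only [Pk, Set.mem_setOf_eq] at h1 h2
      omega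
  · rcases ht with (rfl | ⟨j, rfl⟩) | ⟨g, rfl⟩
    · left; exact Set.univ_subset_iff.mp hts
    · exfalso
      have h1 : 2 * j ∈ Pk j := by simp only [Pk, Set.mem_setOf_eq]; omega
      have h2 : 2 * j + 1 ∈ Pk j := by simp only [Pk, Set.mem_setOf_eq]; omega
      have e1 := hts h1
      have e2 := hts h2
      rw [mem_Xf] at e1 e2
      have d1 : 2 * j / 2 = j := by omega
      have d2 : (2 * j + 1) / 2 = j := by omega
      rw [d1] at e1; rw [d2] at e2
      omega
    · right; rw [Xf_inj hts]

lemma T0_tree : IsInclTree T0 := by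
  refine ⟨?_, ?_, ?_⟩
  · rintro A ((rfl | ⟨k, rfl⟩) | ⟨f, rfl⟩)
    · exact ⟨0, Set.mem_univ 0⟩
    · exact ⟨2 * k, by simp only [Pk, Set.mem_setOf_eq]; omega⟩
    · exact ⟨2 * 0 + (f 0).toNat, sel_mem_Xf f 0⟩
  · exact Or.inl (Or.inl rfl)
  · intro t ht S hS hSne
    by_cases hu : Set.univ ∈ S
    · exact ⟨Set.univ, hu, fun s _ => Set.subset_univ s⟩
    · obtain ⟨a, ha⟩ := hSne
      refine ⟨a, ha, fun s hsS => ?_⟩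
      have hsa : s = t := by
        rcases antichain s (hS hsS).1 t ht (hS hsS).2 with h | h
        · exact absurd (h ▸ hsS) hu
        · exact h
      have haa : a = t := by
        rcases antichain a (hS ha).1 t ht (hS ha).2 with h | h
        · exact absurd (h ▸ ha) hu
        · exact h
      rw [hsa, haa]

lemma T0_max : ∀ T', IsInclTree T' → InclEndExt T0 T' → T' = T0 := by
  intro T' hT' hext
  classical
  obtain ⟨hsub, hpred⟩ := hext
  apply Set.Subset.antisymm _ hsub
  intro A hA
  by_contra hAn
  by_cases hp : ∃ k, 2 * k ∈ A ∧ 2 * k + 1 ∈ A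
  · obtain ⟨k, hk0, hk1⟩ := hp
    have hPk : Pk k ∈ T0 := Or.inl (Or.inr ⟨k, rfl⟩)
    have hAP : Pk k ⊆ A := by
      intro m hm
      simp only [Pk, Set.mem_setOf_eq] at hm
      have : m = 2 * k ∨ m = 2 * k + 1 := by omega
      rcases this with rfl | rfl
      exacts [hk0, hk1]
    have : A ∈ InclPred T' (Pk k) := ⟨hA, hAP⟩
    rw [hpred _ hPk] at this
    exact hAn this.1
  · push_neg at hp
    set f : ℕ → Bool := fun k => decide (2 * k + 1 ∈ A) with hf
    have hAf : A ⊆ Xf f := by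
      intro m hm
      rw [mem_Xf]
      rcases Nat.even_or_odd m with ⟨j, hj⟩ | ⟨j, hj⟩
      · have hd : m / 2 = j := by omega
        have hm2 : m % 2 = 0 := by omega
        have hj0 : 2 * j ∈ A := by rwa [show 2 * j = m by omega]
        have hno : ¬ (2 * j + 1 ∈ A) := fun h => hp j hj0 h
        rw [hd, hm2, hf]
        simp [hno]
      · have hd : m / 2 = j := by omega
        have hm2 : m % 2 = 1 := by omega
        have hj1 : 2 * j + 1 ∈ A := by rwa [show 2 * j + 1 = m by omega]
        rw [hd, hm2, hf]
        simp [hj1]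
    by_cases hmiss : ∃ k, 2 * k ∉ A ∧ 2 * k + 1 ∉ A
    · obtain ⟨k, hk0, hk1⟩ := hmiss
      set g : ℕ → Bool := fun j => if j = k then !(f k) else f j with hg
      have hAg : A ⊆ Xf g := by
        intro m hm
        have hfm := hAf hm
        rw [mem_Xf] at hfm ⊢
        have hne : m / 2 ≠ k := by
          intro he
          have : m = 2 * k ∨ m = 2 * k + 1 := by omega
          rcases this with rfl | rfl
          exacts [hk0 hm, hk1 hm]
        rw [hg]
        simp only [hne, if_false]
        exact hfm
      have hfg : f k ≠ g k := by rw [hg]; simp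
      have hXfT : Xf f ∈ T' := hsub (Or.inr ⟨f, rfl⟩)
      have hXgT : Xf g ∈ T' := hsub (Or.inr ⟨g, rfl⟩)
      have hincl : ({Xf f, Xf g} : Set (Set ℕ)) ⊆ InclPred T' A := by
        rintro s (rfl | rfl)
        exacts [⟨hXfT, hAf⟩, ⟨hXgT, hAg⟩]
      obtain ⟨m, hm, hmax⟩ := hT'.2.2 A hA _ hincl ⟨Xf f, Or.inl rfl⟩
      have h1 := hmax (Xf f) (Or.inl rfl)
      have h2 := hmax (Xf g) (Or.inr rfl)
      rcases hm with rfl | rfl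
      · exact hfg (congrFun (Xf_inj h2) k).symm
      · exact hfg (congrFun (Xf_inj h1) k)
    · push_neg at hmiss
      apply hAn
      have hEq : A = Xf f := by
        apply Set.Subset.antisymm hAf
        intro m hm
        rw [mem_Xf] at hm
        by_cases h : 2 * (m / 2) ∈ A
        · have hno : ¬ (2 * (m / 2) + 1 ∈ A) := fun hh => hp _ h hh
          have hfv : f (m / 2) = false := by rw [hf]; simp [hno]
          rw [hfv] at hm
          simp only [Bool.toNat_false] at hm
          rwa [show m = 2 * (m / 2) by omega]
        · have h' : 2 * (m / 2) + 1 ∈ A := hmiss (m / 2) h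
          have hfv : f (m / 2) = true := by rw [hf]; simp [h']
          rw [hfv] at hm
          simp only [Bool.toNat_true] at hm
          rwa [show m = 2 * (m / 2) + 1 by omega]
      rw [hEq]
      exact Or.inr ⟨f, rfl⟩

lemma T0_card : Cardinal.mk ↥T0 = Cardinal.continuum := by
  apply le_antisymm
  · calc Cardinal.mk ↥T0 ≤ Cardinal.mk (Set ℕ) := Cardinal.mk_subtype_le _
    _ = Cardinal.continuum := by
        rw [Cardinal.mk_set, Cardinal.mk_nat, Cardinal.two_power_aleph0]
  · have hinj : Function.Injective (fun f : ℕ → Bool => (⟨Xf f, Or.inr ⟨f, rfl⟩⟩ : ↥T0)) := by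
      intro f g h
      exact Xf_inj (le_of_eq (congrArg Subtype.val h))
    calc Cardinal.continuum = Cardinal.mk (ℕ → Bool) := by
          rw [Cardinal.mk_arrow]
          simp [Cardinal.two_power_aleph0]
    _ ≤ Cardinal.mk ↥T0 := Cardinal.mk_le_of_injective hinj

end CMT

/-- There is a maximal subtree of `(P(ω) \ {∅}, ⊆)` of size continuum. -/
theorem exists_continuum_maximal_incl_tree :
    ∃ T : Set (Set ℕ), IsInclTree T ∧
      (∀ T', IsInclTree T' → InclEndExt T T' → T' = T) ∧
      Cardinal.mk ↥T = Cardinal.continuum := by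
  exact ⟨CMT.T0, CMT.T0_tree, CMT.T0_max, CMT.T0_card⟩
end

section
/- The tree number tr satisfies r ≤ tr, where r is the reaping number: every maximal subtree of ([ω]^ω, ⊆*) gives rise to a reaping family of the same cardinality, hence the least size of a maximal tree in P(ω)/fin is at least the reaping number. -/
/-- `A ⊆* B`: almost inclusion, `A \ B` is finite. -/
def AlmostSubset (A B : Set ℕ) : Prop := (A \ B).Finite

/-- `A` and `B` are `⊆*`-incomparable. -/
def StarIncomp (A B : Set ℕ) : Prop := ¬ AlmostSubset A B ∧ ¬ AlmostSubset B A

/-- The predecessors of `t` in `T` with respect to `⊆*` (including `t` itself). -/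
def StarPred (T : Set (Set ℕ)) (t : Set ℕ) : Set (Set ℕ) := {s ∈ T | AlmostSubset t s}

/-- `T` is a subtree of `([ω]^ω, ⊆*)`: all members are infinite, the largest element
`ω` belongs to `T`, distinct members of `T` are not almost equal (so `⊆*` is a genuine
partial order on `T`), and the predecessors of each node are well-ordered by reverse
`⊆*` (every nonempty subset of a predecessor set has a `⊆*`-greatest element). -/
def IsStarTree (T : Set (Set ℕ)) : Prop :=
  (∀ A ∈ T, A.Infinite) ∧ Set.univ ∈ T ∧
    (∀ s ∈ T, ∀ t ∈ T, AlmostSubset s t → AlmostSubset t s → s = t) ∧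
    ∀ t ∈ T, ∀ S ⊆ StarPred T t, S.Nonempty → ∃ m ∈ S, ∀ s ∈ S, AlmostSubset s m

/-- `T` end-extends `S` (as subtrees of `([ω]^ω, ⊆*)`). -/
def StarEndExt (S T : Set (Set ℕ)) : Prop :=
  S ⊆ T ∧ ∀ s ∈ S, StarPred T s = StarPred S s

/-- `T` is a maximal subtree of `([ω]^ω, ⊆*)`: for every infinite `C ⊆ ω` either some
`B ∈ T` satisfies `B ⊆* C`, or there are `⊆*`-incomparable `B, B' ∈ T` with
`C ⊆* B` and `C ⊆* B'`. -/
def IsMaxStarTree (T : Set (Set ℕ)) : Prop :=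
  IsStarTree T ∧ ∀ C : Set ℕ, C.Infinite →
    (∃ B ∈ T, AlmostSubset B C) ∨
      ∃ B ∈ T, ∃ B' ∈ T, StarIncomp B B' ∧ AlmostSubset C B ∧ AlmostSubset C B'

/-- `s` and `t` lie on the same level of `T`: their predecessor sets (which are
well-orders under `⊆*`) are order isomorphic, i.e. have the same order type. -/
def SameLevel (T : Set (Set ℕ)) (s t : Set ℕ) : Prop :=
  Nonempty ((fun a b : StarPred T s => AlmostSubset a.1 b.1) ≃r
    (fun a b : StarPred T t => AlmostSubset a.1 b.1))

/-- `T` has countable levels. -/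
def CountableLevels (T : Set (Set ℕ)) : Prop :=
  ∀ t ∈ T, {s ∈ T | SameLevel T s t}.Countable

/-- A reaping family: for every infinite `B ⊆ ω` some member `A` satisfies
`A ∩ B` finite or `A ⊆* B`. -/
def IsReaping (𝒜 : Set (Set ℕ)) : Prop :=
  (∀ A ∈ 𝒜, A.Infinite) ∧
    ∀ B : Set ℕ, B.Infinite → ∃ A ∈ 𝒜, (A ∩ B).Finite ∨ AlmostSubset A B

/-- The reaping number `𝔯`. -/
noncomputable def reapingNumber : Cardinal :=
  sInf {c | ∃ 𝒜 : Set (Set ℕ), IsReaping 𝒜 ∧ Cardinal.mk ↥𝒜 = c}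

/-- The tree number `𝔱𝔯`: the least size of a maximal subtree of `([ω]^ω, ⊆*)`. -/
noncomputable def treeNumber : Cardinal :=
  sInf {c | ∃ T : Set (Set ℕ), IsMaxStarTree T ∧ Cardinal.mk ↥T = c}

lemma almostSubset_refl (A : Set ℕ) : AlmostSubset A A := by
  simp [AlmostSubset]

lemma almostSubset_of_subset {A B : Set ℕ} (h : A ⊆ B) : AlmostSubset A B := by
  simp [AlmostSubset, Set.diff_eq_empty.mpr h]

lemma almostSubset_trans {A B C : Set ℕ} (h1 : AlmostSubset A B) (h2 : AlmostSubset B C) :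
    AlmostSubset A C := by
  apply Set.Finite.subset (h1.union h2)
  intro x hx
  by_cases hb : x ∈ B
  · exact Or.inr ⟨hb, hx.2⟩
  · exact Or.inl ⟨hx.1, hb⟩

noncomputable def drSeq {n : ℕ} (hn : 0 < n) (h : Fin n → Set ℕ) (hh : ∀ i, (h i).Infinite) :
    ℕ → ℕ
  | 0 => ((hh ⟨0 % n, Nat.mod_lt 0 hn⟩).exists_gt 0).choose
  | (t+1) => ((hh ⟨(t+1) % n, Nat.mod_lt _ hn⟩).exists_gt (drSeq hn h hh t)).choose

lemma drSeq_mem {n : ℕ} (hn : 0 < n) (h : Fin n → Set ℕ) (hh : ∀ i, (h i).Infinite) (t : ℕ) :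
    drSeq hn h hh t ∈ h ⟨t % n, Nat.mod_lt _ hn⟩ := by
  cases t with
  | zero => exact ((hh ⟨0 % n, Nat.mod_lt 0 hn⟩).exists_gt 0).choose_spec.1
  | succ t => exact ((hh ⟨(t+1) % n, Nat.mod_lt _ hn⟩).exists_gt
      (drSeq hn h hh t)).choose_spec.1

lemma drSeq_strictMono {n : ℕ} (hn : 0 < n) (h : Fin n → Set ℕ) (hh : ∀ i, (h i).Infinite) :
    StrictMono (drSeq hn h hh) := by
  apply strictMono_nat_of_lt_succ
  intro t
  exact ((hh ⟨(t+1) % n, Nat.mod_lt _ hn⟩).exists_gt (drSeq hn h hh t)).choose_spec.2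

lemma exists_disjoint_refinement {n : ℕ} (hn : 0 < n) (h : Fin n → Set ℕ)
    (hh : ∀ i, (h i).Infinite) :
    ∃ u : Fin n → Set ℕ, (∀ i, u i ⊆ h i) ∧ (∀ i, (u i).Infinite) ∧
      ∀ i j : Fin n, i ≠ j → Disjoint (u i) (u j) := by
  set f := drSeq hn h hh with hf
  have hinj : Function.Injective f := (drSeq_strictMono hn h hh).injective
  refine ⟨fun i => f '' {t | t % n = i.1}, ?_, ?_, ?_⟩
  · rintro i x ⟨t, ht, rfl⟩
    have := drSeq_mem hn h hh t
    have hi : (⟨t % n, Nat.mod_lt _ hn⟩ : Fin n) = i := Fin.ext ht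
    rwa [hi] at this
  · intro i
    apply Set.Infinite.image (hinj.injOn)
    apply Set.infinite_of_injective_forall_mem (f := fun k : ℕ => i.1 + n * k)
    · intro a b hab
      simp only at hab
      exact Nat.eq_of_mul_eq_mul_left hn (Nat.add_left_cancel hab)
    · intro k
      simp only [Set.mem_setOf_eq]
      rw [Nat.add_mul_mod_self_left]
      exact Nat.mod_eq_of_lt i.2
  · intro i j hij
    rw [Set.disjoint_left]
    rintro x ⟨t, ht, rfl⟩ ⟨t', ht', hx⟩
    exact hij (Fin.ext (ht ▸ ht' ▸ congrArg (· % n) (hinj hx.symm)))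

lemma exists_diagonal (F G : Set (Set ℕ)) (hF : F.Finite) (hG : G.Finite)
    (hFi : ∀ f ∈ F, f.Infinite) (hGi : ∀ g ∈ G, g.Infinite) :
    ∃ B : Set ℕ, B.Infinite ∧ (∀ f ∈ F, (f \ B).Infinite) ∧ (∀ g ∈ G, (B ∩ g).Infinite) := by
  classical
  haveI : Fintype F := hF.fintype
  haveI : Fintype G := hG.fintype
  set ι := (F ⊕ (G ⊕ PUnit) : Type)
  haveI : Fintype ι := by infer_instance
  set n := Fintype.card ι with hn
  have hcard : 0 < n := Fintype.card_pos_iff.mpr ⟨Sum.inr (Sum.inr PUnit.unit)⟩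
  set e := (Fintype.equivFin ι) with he
  set h : Fin n → Set ℕ := fun k => Sum.elim (fun f : F => f.1)
      (Sum.elim (fun g : G => g.1) (fun _ => Set.univ)) (e.symm k) with hhdef
  have hh : ∀ i, (h i).Infinite := by
    intro i
    rcases hev : e.symm i with f | g | u
    · simpa [hhdef, hev] using hFi f.1 f.2
    · simpa [hhdef, hev] using hGi g.1 g.2
    · simpa [hhdef, hev] using Set.infinite_univ
  obtain ⟨u, hsub, hinf, hdisj⟩ := exists_disjoint_refinement hcard h hh
  set B : Set ℕ := (⋃ g : G, u (e (Sum.inr (Sum.inl g)))) ∪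
      u (e (Sum.inr (Sum.inr PUnit.unit))) with hB
  have hval : ∀ x : ι, h (e x) = Sum.elim (fun f : F => f.1)
      (Sum.elim (fun g : G => g.1) (fun _ => Set.univ)) x := by
    intro x; simp [hhdef]
  refine ⟨B, ?_, ?_, ?_⟩
  · exact (hinf _).mono Set.subset_union_right
  · intro f hf
    apply (hinf (e (Sum.inl ⟨f, hf⟩))).mono
    intro x hx
    refine ⟨?_, ?_⟩
    · have := hsub _ hx
      rwa [hval (Sum.inl ⟨f, hf⟩)] at this
    · intro hxB
      rcases hxB with hxB | hxB
      · obtain ⟨g, hgx⟩ := Set.mem_iUnion.mp hxB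
        exact (Set.disjoint_left.mp (hdisj _ _
          (fun hEq => by simpa using e.injective hEq)) hx) hgx
      · exact (Set.disjoint_left.mp (hdisj _ _
          (fun hEq => by simpa using e.injective hEq)) hx) hxB
  · intro g hg
    apply (hinf (e (Sum.inr (Sum.inl ⟨g, hg⟩)))).mono
    intro x hx
    refine ⟨Or.inl (Set.mem_iUnion.mpr ⟨⟨g, hg⟩, hx⟩), ?_⟩
    have := hsub _ hx
    rwa [hval (Sum.inr (Sum.inl ⟨g, hg⟩))] at this

lemma tree_singleton : IsStarTree {Set.univ} := by
  refine ⟨?_, rfl, ?_, ?_⟩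
  · rintro A rfl; exact Set.infinite_univ
  · rintro s rfl t rfl _ _; rfl
  · rintro t rfl S hS ⟨x, hx⟩
    have hx' : x = Set.univ := by
      have := hS hx; exact this.1
    refine ⟨x, hx, fun s hs => ?_⟩
    have hs' : s = Set.univ := (hS hs).1
    subst hs' hx'
    exact almostSubset_refl _

lemma starEndExt_trans {S T U : Set (Set ℕ)} (h1 : StarEndExt S T) (h2 : StarEndExt T U) :
    StarEndExt S U := by
  refine ⟨h1.1.trans h2.1, fun s hs => ?_⟩
  rw [h2.2 s (h1.1 hs), h1.2 s hs]

lemma tree_insert {T : Set (Set ℕ)} (hT : IsStarTree T) {C : Set ℕ} (hC : C.Infinite)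
    (h1 : ∀ B ∈ T, ¬ AlmostSubset B C)
    (h2 : ¬ ∃ B ∈ T, ∃ B' ∈ T, StarIncomp B B' ∧ AlmostSubset C B ∧ AlmostSubset C B') :
    IsStarTree (insert C T) ∧ StarEndExt T (insert C T) ∧ C ∉ T := by
  obtain ⟨hinf, huniv, hdist, hwo⟩ := hT
  have hCnot : C ∉ T := fun h => h1 C h (almostSubset_refl C)
  have hchain : ∀ u ∈ T, ∀ v ∈ T, AlmostSubset C u → AlmostSubset C v →
      AlmostSubset u v ∨ AlmostSubset v u := by
    intro u hu v hv hcu hcv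
    by_contra hcon
    push_neg at hcon
    exact h2 ⟨u, hu, v, hv, ⟨hcon.1, hcon.2⟩, hcu, hcv⟩
  have hpred_old : ∀ s ∈ T, StarPred (insert C T) s = StarPred T s := by
    intro s hs
    ext t
    simp only [StarPred, Set.mem_setOf_eq, Set.mem_insert_iff]
    constructor
    · rintro ⟨rfl | ht, hst⟩
      · exact absurd hst (h1 s hs)
      · exact ⟨ht, hst⟩
    · rintro ⟨ht, hst⟩; exact ⟨Or.inr ht, hst⟩
  have hext : StarEndExt T (insert C T) := ⟨Set.subset_insert _ _, hpred_old⟩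
  refine ⟨⟨?_, Or.inr huniv, ?_, ?_⟩, hext, hCnot⟩
  · rintro A (rfl | hA)
    · exact hC
    · exact hinf A hA
  · rintro s (rfl | hs) t (rfl | ht) hst hts
    · rfl
    · exact absurd hts (h1 t ht)
    · exact absurd hst (h1 s hs)
    · exact hdist s hs t ht hst hts
  · rintro t (rfl | ht) S hS hSne
    · -- predecessors of C : a chain, well-ordered
      by_cases hSC : ∃ B ∈ S, B ∈ T
      · obtain ⟨B, hBS, hBT⟩ := hSC
        have hsubP : ∀ s ∈ S, s ∈ T → AlmostSubset t s := by
          intro s hsS hsT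
          have := hS hsS
          exact this.2
        set S' := {s ∈ S | s ∈ T ∧ AlmostSubset B s} with hS'
        have hS'sub : S' ⊆ StarPred T B := fun s hs => ⟨hs.2.1, hs.2.2⟩
        obtain ⟨m, hmS', hm⟩ := hwo B hBT S' hS'sub ⟨B, hBS, hBT, almostSubset_refl B⟩
        refine ⟨m, hmS'.1, fun s hsS => ?_⟩
        rcases (hS hsS).1 with rfl | hsT
        · exact hsubP m hmS'.1 hmS'.2.1
        · rcases hchain s hsT B hBT (hsubP s hsS hsT) (hsubP B hBS hBT) with h | h
          · exact almostSubset_trans h hmS'.2.2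
          · exact hm s ⟨hsS, hsT, h⟩
      · push_neg at hSC
        obtain ⟨x, hx⟩ := hSne
        have hxC : x = t := by
          rcases (hS hx).1 with rfl | hxT
          · rfl
          · exact absurd hxT (hSC x hx)
        refine ⟨x, hx, fun s hs => ?_⟩
        have hsC : s = t := by
          rcases (hS hs).1 with rfl | hsT
          · rfl
          · exact absurd hsT (hSC s hs)
        subst hsC; subst hxC
        exact almostSubset_refl _
    · rw [hpred_old t ht] at hS
      exact hwo t ht S hS hSne

lemma starTree_chain_bounded (c : Set {T : Set (Set ℕ) // IsStarTree T})
    (hc : IsChain (fun S T : {T : Set (Set ℕ) // IsStarTree T} => StarEndExt S.1 T.1) c) :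
    ∃ ub : {T : Set (Set ℕ) // IsStarTree T}, ∀ a ∈ c, StarEndExt a.1 ub.1 := by
  rcases Set.eq_empty_or_nonempty c with rfl | ⟨T₀, hT₀⟩
  · exact ⟨⟨{Set.univ}, tree_singleton⟩, fun a ha => absurd ha (Set.notMem_empty a)⟩
  · set U : Set (Set ℕ) := ⋃ T ∈ c, T.1 with hU
    have hmemU : ∀ T ∈ c, T.1 ⊆ U := by
      intro T hT x hx
      exact Set.mem_biUnion hT hx
    have hpredU : ∀ T ∈ c, ∀ s ∈ T.1, StarPred U s = StarPred T.1 s := by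
      intro T hT s hs
      ext t
      simp only [StarPred, Set.mem_setOf_eq]
      constructor
      · rintro ⟨htU, hst⟩
        obtain ⟨T', hT', htT'⟩ := Set.mem_iUnion₂.mp htU
        rcases eq_or_ne T T' with rfl | hne
        · exact ⟨htT', hst⟩
        · rcases hc hT hT' hne with h | h
          · have h2 := h.2 s hs
            have h3 : t ∈ StarPred T.1 s := by rw [← h2]; exact ⟨htT', hst⟩
            exact h3
          · exact ⟨h.1 htT', hst⟩
      · rintro ⟨htT, hst⟩
        exact ⟨hmemU T hT htT, hst⟩
    have hUtree : IsStarTree U := by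
      refine ⟨?_, ?_, ?_, ?_⟩
      · rintro A hA
        obtain ⟨T, hT, hAT⟩ := Set.mem_iUnion₂.mp hA
        exact T.2.1 A hAT
      · exact hmemU T₀ hT₀ T₀.2.2.1
      · rintro s hs t ht hst hts
        obtain ⟨T, hT, hsT⟩ := Set.mem_iUnion₂.mp hs
        obtain ⟨T', hT', htT'⟩ := Set.mem_iUnion₂.mp ht
        rcases eq_or_ne T T' with rfl | hne
        · exact T.2.2.2.1 s hsT t htT' hst hts
        · rcases hc hT hT' hne with h | h
          · exact T'.2.2.2.1 s (h.1 hsT) t htT' hst hts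
          · exact T.2.2.2.1 s hsT t (h.1 htT') hst hts
      · rintro t ht S hS hSne
        obtain ⟨T, hT, htT⟩ := Set.mem_iUnion₂.mp ht
        rw [hpredU T hT t htT] at hS
        exact T.2.2.2.2 t htT S hS hSne
    exact ⟨⟨U, hUtree⟩, fun T hT => ⟨hmemU T hT, hpredU T hT⟩⟩

lemma exists_maxStarTree : ∃ T : Set (Set ℕ), IsMaxStarTree T := by
  obtain ⟨M, hM⟩ := exists_maximal_of_chains_bounded starTree_chain_bounded
    (fun {a b c} => starEndExt_trans)
  refine ⟨M.1, M.2, ?_⟩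
  intro C hC
  by_contra hcon
  push_neg at hcon
  obtain ⟨hd1, hd2⟩ := hcon
  have h2 : ¬ ∃ B ∈ M.1, ∃ B' ∈ M.1, StarIncomp B B' ∧ AlmostSubset C B ∧ AlmostSubset C B' := by
    rintro ⟨B, hB, B', hB', hi, hcb, hcb'⟩
    exact (hd2 B hB B' hB' hi hcb) hcb'
  have h1 : ∀ B ∈ M.1, ¬ AlmostSubset B C := fun B hB => hd1 B hB
  obtain ⟨htree, hext, hnotmem⟩ := tree_insert M.2 hC h1 h2
  have := hM ⟨insert C M.1, htree⟩ hext
  exact hnotmem (this.1 (Set.mem_insert C M.1))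

lemma maxTree_infinite {T : Set (Set ℕ)} (hT : IsMaxStarTree T) : T.Infinite := by
  by_contra hfin
  rw [Set.not_infinite] at hfin
  set G : Set (Set ℕ) :=
    (fun p : Set ℕ × Set ℕ => (p.1 ∩ p.2)ᶜ) '' {p ∈ T ×ˢ T | StarIncomp p.1 p.2} with hGdef
  have hGfin : G.Finite := ((hfin.prod hfin).subset (Set.sep_subset _ _)).image _
  have hGinf : ∀ g ∈ G, g.Infinite := by
    rintro g ⟨⟨u, v⟩, ⟨⟨hu, hv⟩, hi⟩, rfl⟩
    have huv : (u \ v).Infinite := hi.1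
    exact huv.mono (fun x hx hmem => hx.2 hmem.2)
  obtain ⟨B, hBinf, hFp, hGp⟩ := exists_diagonal T G hfin hGfin hT.1.1 hGinf
  rcases hT.2 B hBinf with ⟨s, hs, hsub⟩ | ⟨u, hu, v, hv, hi, h1, h2⟩
  · exact hFp s hs hsub
  · have hg : (u ∩ v)ᶜ ∈ G := ⟨(u, v), ⟨⟨hu, hv⟩, hi⟩, rfl⟩
    apply hGp _ hg
    apply Set.Finite.subset (h1.union h2)
    rintro x ⟨hxB, hxc⟩
    by_cases hxu : x ∈ u
    · exact Or.inr ⟨hxB, fun hxv => hxc ⟨hxu, hxv⟩⟩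
    · exact Or.inl ⟨hxB, hxu⟩

lemma maxTree_reaping {T : Set (Set ℕ)} (hT : IsMaxStarTree T) :
    ∃ 𝒜 : Set (Set ℕ), IsReaping 𝒜 ∧ Cardinal.mk ↥𝒜 = Cardinal.mk ↥T := by
  set D : Set (Set ℕ) :=
    (fun p : Set ℕ × Set ℕ => p.1 \ p.2) '' {p ∈ T ×ˢ T | (p.1 \ p.2).Infinite} with hDdef
  refine ⟨T ∪ D, ⟨?_, ?_⟩, ?_⟩
  · rintro A (hA | ⟨⟨u, v⟩, ⟨-, hinf⟩, rfl⟩)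
    · exact hT.1.1 A hA
    · exact hinf
  · intro B hB
    rcases hT.2 B hB with ⟨s, hs, hsub⟩ | ⟨u, hu, v, hv, hi, h1, h2⟩
    · exact ⟨s, Or.inl hs, Or.inr hsub⟩
    · refine ⟨u \ v, Or.inr ⟨(u, v), ⟨⟨hu, hv⟩, hi.1⟩, rfl⟩, Or.inl ?_⟩
      exact Set.Finite.subset h2 (fun x hx => ⟨hx.2, hx.1.2⟩)
  · have hTinf : Cardinal.aleph0 ≤ Cardinal.mk ↥T := by
      haveI := (maxTree_infinite hT).to_subtype
      exact Cardinal.infinite_iff.mp inferInstance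
    apply le_antisymm
    · have hD : Cardinal.mk ↥D ≤ Cardinal.mk ↥T := by
        calc Cardinal.mk ↥D ≤ Cardinal.mk ↥{p ∈ T ×ˢ T | (p.1 \ p.2).Infinite} :=
              Cardinal.mk_image_le
          _ ≤ Cardinal.mk ↥(T ×ˢ T) := Cardinal.mk_le_mk_of_subset (Set.sep_subset _ _)
          _ = Cardinal.mk ↥T * Cardinal.mk ↥T := Cardinal.mk_setProd T T
          _ = Cardinal.mk ↥T := Cardinal.mul_eq_self hTinf
      calc Cardinal.mk ↥(T ∪ D) ≤ Cardinal.mk ↥T + Cardinal.mk ↥D := Cardinal.mk_union_le T D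
        _ ≤ Cardinal.mk ↥T + Cardinal.mk ↥T := by exact add_le_add_right hD _
        _ = Cardinal.mk ↥T := Cardinal.add_eq_self hTinf
    · exact Cardinal.mk_le_mk_of_subset Set.subset_union_left

/-- `𝔯 ≤ 𝔱𝔯`: every maximal subtree of `([ω]^ω, ⊆*)` gives rise to a reaping family
of the same cardinality, hence the least size of a maximal tree in `P(ω)/fin` is at
least the reaping number. -/
theorem reaping_le_treeNumber :
    (∀ T : Set (Set ℕ), IsMaxStarTree T →
      ∃ 𝒜 : Set (Set ℕ), IsReaping 𝒜 ∧ Cardinal.mk ↥𝒜 = Cardinal.mk ↥T) ∧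
    reapingNumber ≤ treeNumber := by
  refine ⟨fun T hT => maxTree_reaping hT, ?_⟩
  obtain ⟨T0, hT0⟩ := exists_maxStarTree
  have hne : {c | ∃ T : Set (Set ℕ), IsMaxStarTree T ∧ Cardinal.mk ↥T = c}.Nonempty :=
    ⟨_, T0, hT0, rfl⟩
  have hmem : treeNumber ∈ {c | ∃ T : Set (Set ℕ), IsMaxStarTree T ∧ Cardinal.mk ↥T = c} :=
    csInf_mem hne
  obtain ⟨T, hT, hTc⟩ := hmem
  obtain ⟨𝒜, h𝒜, hcard⟩ := maxTree_reaping hT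
  calc reapingNumber ≤ Cardinal.mk ↥𝒜 := csInf_le' ⟨𝒜, h𝒜, rfl⟩
    _ = Cardinal.mk ↥T := hcard
    _ = treeNumber := hTc
end

section
/- If a subtree T of ([ω]^ω, ⊆*) with countable levels contains nodes A_s for s ∈ 2^{<ω} such that A_s and A_t are ⊆*-incomparable for incomparable s, t ∈ 2^{<ω}, A_t ⊆* A_s for t extending s, each A_s with s ∈ 2^n lies on a level below α_n where (α_n) is strictly increasing with supremum α_ω, and for every f ∈ 2^ω there is a node A_f ∈ T on level α_ω with A_f ⊆* A_{f↾n} for all n, then level α_ω of T has size continuum — contradicting countability of levels. -/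
/-- If a subtree `T` of `([ω]^ω, ⊆*)` contains nodes `A_s`, `s ∈ 2^{<ω}`, with `A_s`,
`A_t` incomparable for incomparable `s, t` and `A_t ⊆* A_s` for `t` extending `s`, and
for every `f ∈ 2^ω` a node `A_f ⊆* A_{f↾n}` (for all `n`), all on one common level,
then that level has size (at least) continuum. -/
theorem level_of_size_continuum (T : Set (Set ℕ)) (hT : IsStarTree T)
    (A : List Bool → Set ℕ) (hmem : ∀ s, A s ∈ T)
    (hinc : ∀ s t : List Bool, ¬ s <+: t → ¬ t <+: s → StarIncomp (A s) (A t))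
    (hdec : ∀ s t : List Bool, s <+: t → AlmostSubset (A t) (A s))
    (Af : (ℕ → Bool) → Set ℕ) (hAf : ∀ f, Af f ∈ T)
    (hAfd : ∀ (f : ℕ → Bool) (n : ℕ),
      AlmostSubset (Af f) (A (List.ofFn fun i : Fin n => f i)))
    (hsame : ∀ f g : ℕ → Bool, SameLevel T (Af f) (Af g)) :
    Cardinal.continuum ≤
      Cardinal.mk ↥{x ∈ T | SameLevel T x (Af fun _ => false)} := by

  -- Af is injective
  have hinj : Function.Injective Af := by
    intro f g hfg
    by_contra hne
    have : ∃ n, f n ≠ g n := by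
      by_contra h
      push_neg at h
      exact hne (funext h)
    obtain ⟨n, hn⟩ := this
    set s := List.ofFn fun i : Fin (n+1) => f i with hs
    set t := List.ofFn fun i : Fin (n+1) => g i with ht
    have hst : s ≠ t := by
      intro h
      apply hn
      have h2 := List.ofFn_injective h
      exact congrFun h2 ⟨n, Nat.lt_succ_self n⟩
    have hlen : s.length = t.length := by simp [hs, ht]
    have h1 : ¬ s <+: t := fun h => hst (List.IsPrefix.eq_of_length h hlen)
    have h2 : ¬ t <+: s := fun h => hst (List.IsPrefix.eq_of_length h hlen.symm).symm
    have hincst := hinc s t h1 h2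
    -- both A s and A t are predecessors of Af f
    have hps : A s ∈ StarPred T (Af f) := ⟨hmem s, hAfd f (n+1)⟩
    have hpt : A t ∈ StarPred T (Af f) := ⟨hmem t, by rw [hfg]; exact hAfd g (n+1)⟩
    obtain ⟨_, _, _, hwo⟩ := hT
    obtain ⟨m, hmS, hmax⟩ := hwo (Af f) (hAf f) {A s, A t}
      (by rintro x (rfl | rfl); exacts [hps, hpt]) ⟨A s, Or.inl rfl⟩
    rcases hmS with rfl | rfl
    · exact hincst.2 (hmax (A t) (Or.inr rfl))
    · exact hincst.1 (hmax (A s) (Or.inl rfl))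
  have hmap : ∀ f : ℕ → Bool, Af f ∈ {x ∈ T | SameLevel T x (Af fun _ => false)} :=
    fun f => ⟨hAf f, hsame f _⟩
  have : Cardinal.mk (ℕ → Bool) ≤ Cardinal.mk ↥{x ∈ T | SameLevel T x (Af fun _ => false)} :=
    Cardinal.mk_le_of_injective (f := fun f => (⟨Af f, hmap f⟩ : {x ∈ T | SameLevel T x (Af fun _ => false)}))
      (fun a b h => hinj (congrArg Subtype.val h))
  calc Cardinal.continuum = Cardinal.mk (ℕ → Bool) := by
        rw [Cardinal.mk_arrow, Cardinal.mk_bool, Cardinal.mk_nat, Cardinal.lift_aleph0, Cardinal.lift_id,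
          Cardinal.two_power_aleph0]
    _ ≤ _ := this
end

section
/- Suppose T = {A_s : s ∈ γ^{<ω}} is a wide-branching tree (with γ ≥ ω a limit ordinal), s ∈ γ^{<ω} \ {⟨⟩}, D, E ⊆ γ are finite with s(0) ∉ E, and F is a set with F ∩ A_t infinite for all t ∈ γ^{<ω}. Then F ∩ A_s \ (⋃_{β∈D} A_{s⌢⟨β⟩} ∪ ⋃_{α∈E} A_{⟨α⟩}) is infinite. -/
/-- `s ∈ γ^{<ω}`: a finite sequence all of whose entries are `< γ`. -/
def InSeqs (γ : Ordinal) (s : List Ordinal) : Prop := ∀ x ∈ s, x < γ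

/-- `T = {A_s : s ∈ γ^{<ω}}` is a wide-branching tree (Definition 4.1) in
`(P(ω) \ {∅}, ⊆)`:
the root is `ω`, all nodes are infinite, (ii) `A_t ⊆ A_s` for `s ⊆ t` (prefix),
(iii) no `A_{⟨β⟩}` is covered by finitely many other `A_{⟨α⟩}` modulo a finite set,
(iv) each level `n ≥ 2` is an almost disjoint family, and (v) for `α ≤ β < γ` and
`s` of length `≥ 2` with `s(0) ≠ α` and `β ∈ ran(s)`, `A_s` and `A_{⟨α⟩}` are almost
disjoint. -/
def IsWideBranchingTree (γ : Ordinal) (A : List Ordinal → Set ℕ) : Prop :=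
  A [] = Set.univ ∧
  (∀ s : List Ordinal, InSeqs γ s → (A s).Infinite) ∧
  (∀ s t : List Ordinal, InSeqs γ t → s <+: t → A t ⊆ A s) ∧
  (∀ D : Finset Ordinal, (∀ α ∈ D, α < γ) → ∀ β < γ, β ∉ D →
    (A [β] \ ⋃ α ∈ D, A [α]).Infinite) ∧
  (∀ s t : List Ordinal, InSeqs γ s → InSeqs γ t → 2 ≤ s.length →
    s.length = t.length → s ≠ t → (A s ∩ A t).Finite) ∧
  (∀ α β : Ordinal, α ≤ β → β < γ → ∀ s : List Ordinal, InSeqs γ s →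
    2 ≤ s.length → s.head? ≠ some α → β ∈ s → (A s ∩ A [α]).Finite)

lemma add_nat_lt_of_limit {γ x : Ordinal} (hγ : Order.IsSuccLimit γ) (hx : x < γ) (n : ℕ) :
    x + n < γ := by
  induction n with
  | zero => simpa using hx
  | succ n ih =>
      have : x + (n + 1 : ℕ) = Order.succ (x + n) := by
        push_cast
        rw [← add_assoc]
        rfl
      rw [this]
      exact hγ.succ_lt ih

/-- In a wide-branching tree, if `F ∩ A_t` is infinite for all `t ∈ γ^{<ω}`, then for
any `s ≠ ⟨⟩`, finite `D, E ⊆ γ` with `s(0) ∉ E`, the set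
`F ∩ A_s \ (⋃_{β∈D} A_{s⌢⟨β⟩} ∪ ⋃_{α∈E} A_{⟨α⟩})` is infinite. -/
theorem wideBranching_positivity (γ : Ordinal) (hγω : Ordinal.omega0 ≤ γ)
    (hγ : Order.IsSuccLimit γ) (A : List Ordinal → Set ℕ)
    (hT : IsWideBranchingTree γ A)
    (s : List Ordinal) (hs : InSeqs γ s) (hsne : s ≠ [])
    (D E : Finset Ordinal) (hD : ∀ β ∈ D, β < γ) (hE : ∀ α ∈ E, α < γ)
    (hs0 : ∀ α ∈ E, s.head? ≠ some α)
    (F : Set ℕ) (hF : ∀ t : List Ordinal, InSeqs γ t → (F ∩ A t).Infinite) :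
    ((F ∩ A s) \ ((⋃ β ∈ D, A (s ++ [β])) ∪ ⋃ α ∈ E, A [α])).Infinite := by
  obtain ⟨hroot, hinf, hmono, hiii, hiv, hv⟩ := hT
  -- choose δ < γ with δ ∉ D and ∀ α ∈ E, α ≤ δ
  set m : Ordinal := E.sup id with hm
  have hmγ : m < γ := by
    apply Finset.sup_lt_iff (by exact hγ.pos) |>.mpr
    intro α hα; exact hE α hα
  have hinj : Function.Injective (fun n : ℕ => m + (n : Ordinal)) := by
    intro a b hab
    simp only at hab
    exact Nat.cast_injective ((add_right_inj m).mp hab)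
  have hrange : (Set.range (fun n : ℕ => m + (n : Ordinal))).Infinite :=
    Set.infinite_range_of_injective hinj
  obtain ⟨δ, hδr, hδD⟩ := hrange.exists_notMem_finset D
  obtain ⟨n, hn⟩ := hδr
  simp only at hn
  have hδγ : δ < γ := hn ▸ add_nat_lt_of_limit hγ hmγ n
  have hEδ : ∀ α ∈ E, α ≤ δ := fun α hα =>
    le_trans (Finset.le_sup (f := id) hα) (hn ▸ (le_self_add : m ≤ m + (n : Ordinal)))
  have hsδ : InSeqs γ (s ++ [δ]) := by
    intro x hx
    rcases List.mem_append.mp hx with h | h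
    · exact hs x h
    · simp at h; subst h; exact hδγ
  have hlen : 2 ≤ (s ++ [δ]).length := by
    have := List.length_pos_iff.mpr hsne
    simp; omega
  have hhead : (s ++ [δ]).head? = s.head? := by
    cases s with
    | nil => exact absurd rfl hsne
    | cons a l => simp
  -- the bad part is finite
  have hfin : ((⋃ β ∈ D, A (s ++ [δ]) ∩ A (s ++ [β])) ∪
      ⋃ α ∈ E, A (s ++ [δ]) ∩ A [α]).Finite := by
    apply Set.Finite.union
    · apply Set.Finite.biUnion D.finite_toSet
      intro β hβ
      have hsβ : InSeqs γ (s ++ [β]) := by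
        intro x hx
        rcases List.mem_append.mp hx with h | h
        · exact hs x h
        · simp at h; rw [h]; exact hD β hβ
      refine hiv (s ++ [δ]) (s ++ [β]) hsδ hsβ hlen (by simp) ?_
      intro h
      have hδβ : δ = β := by
        have := List.append_cancel_left h
        simpa using this
      exact hδD (hδβ ▸ hβ)
    · apply Set.Finite.biUnion E.finite_toSet
      intro α hα
      exact hv α δ (hEδ α hα) hδγ (s ++ [δ]) hsδ hlen
        (hhead ▸ hs0 α hα) (by simp)
  have hGinf : ((F ∩ A (s ++ [δ])) \
      ((⋃ β ∈ D, A (s ++ [δ]) ∩ A (s ++ [β])) ∪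
      ⋃ α ∈ E, A (s ++ [δ]) ∩ A [α])).Infinite :=
    (hF _ hsδ).diff hfin
  apply hGinf.mono
  rintro x ⟨⟨hxF, hxA⟩, hxB⟩
  have hxAs : x ∈ A s := hmono s (s ++ [δ]) hsδ ⟨[δ], rfl⟩ hxA
  refine ⟨⟨hxF, hxAs⟩, ?_⟩
  intro hbad
  apply hxB
  rcases hbad with h | h
  · left
    simp only [Set.mem_iUnion] at h ⊢
    obtain ⟨β, hβ, hx⟩ := h
    exact ⟨β, hβ, hxA, hx⟩
  · right
    simp only [Set.mem_iUnion] at h ⊢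
    obtain ⟨α, hα, hx⟩ := h
    exact ⟨α, hα, hxA, hx⟩
end
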